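/- Let f: [0,∞) → ℝ be a C² function with f''(v) ≥ k(1 + v^{λ−2}) for some k > 0 and λ > 2, and define Δ_f(v,v₀) = f(v) − f(v₀) − (v−v₀)f'(v₀). Then there exists c > 0 (depending only on k and λ) such that Δ_f(v,v₀) ≥ c((1+v)^{λ/2} − (1+v₀)^{λ/2})² for all v, v₀ ≥ 0. -/

import Mathlib

open Real Set

/-- Taylor remainder of a function with nonnegative second derivative is nonnegative. -/
lemma taylor_remainder_nonneg_aux {g g' g'' : ℝ → ℝ}
    (hg : ∀ v ∈ Ici (0:ℝ), HasDerivWithinAt g (g' v) (Ici 0) v)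
    (hg' : ∀ v ∈ Ici (0:ℝ), HasDerivWithinAt g' (g'' v) (Ici 0) v)
    (h0 : ∀ v ∈ Ici (0:ℝ), 0 ≤ g'' v)
    {v v₀ : ℝ} (hv : 0 ≤ v) (hv₀ : 0 ≤ v₀) :
    0 ≤ g v - g v₀ - (v - v₀) * g' v₀ := by
  have hmono : MonotoneOn g' (Ici 0) := by
    apply monotoneOn_of_hasDerivWithinAt_nonneg (convex_Ici 0)
      (f' := g'') (fun x hx => (hg' x hx).continuousWithinAt) ?_ ?_
    · intro x hx
      rw [interior_Ici] at hx ⊢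
      exact (hg' x (mem_Ici.mpr (le_of_lt hx))).mono Ioi_subset_Ici_self
    · intro x hx
      rw [interior_Ici] at hx
      exact h0 x (mem_Ici.mpr (le_of_lt hx))
  have hgc : ContinuousOn g (Ici 0) := fun x hx => (hg x hx).continuousWithinAt
  rcases le_total v₀ v with hle | hle
  · have key : MonotoneOn (fun x => g x - g' v₀ * x) (Icc v₀ v) := by
      apply monotoneOn_of_hasDerivWithinAt_nonneg (convex_Icc v₀ v)
        (f' := fun x => g' x - g' v₀)
      · exact (hgc.mono (Icc_subset_Ici_self.trans (Ici_subset_Ici.mpr hv₀))).sub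
          ((continuous_const.mul continuous_id).continuousOn)
      · intro x hx
        rw [interior_Icc] at hx
        have hx0 : (0:ℝ) ≤ x := le_trans hv₀ hx.1.le
        have h1 : HasDerivWithinAt g (g' x) (interior (Icc v₀ v)) x := by
          rw [interior_Icc]
          exact (hg x hx0).mono (fun y hy => le_trans hv₀ hy.1.le)
        have h2 : HasDerivAt (fun x : ℝ => g' v₀ * x) (g' v₀) x := by
          simpa using (hasDerivAt_id x).const_mul (g' v₀)
        exact h1.sub h2.hasDerivWithinAt
      · intro x hx
        rw [interior_Icc] at hx
        have : g' v₀ ≤ g' x := hmono hv₀ (le_trans hv₀ hx.1.le) hx.1.le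
        linarith
    have := key (left_mem_Icc.mpr hle) (right_mem_Icc.mpr hle) hle
    simp only at this
    nlinarith [this]
  · have key : AntitoneOn (fun x => g x - g' v₀ * x) (Icc v v₀) := by
      apply antitoneOn_of_hasDerivWithinAt_nonpos (convex_Icc v v₀)
        (f' := fun x => g' x - g' v₀)
      · exact (hgc.mono (Icc_subset_Ici_self.trans (Ici_subset_Ici.mpr hv))).sub
          ((continuous_const.mul continuous_id).continuousOn)
      · intro x hx
        rw [interior_Icc] at hx
        have hx0 : (0:ℝ) ≤ x := le_trans hv hx.1.le
        have h1 : HasDerivWithinAt g (g' x) (interior (Icc v v₀)) x := by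
          rw [interior_Icc]
          exact (hg x hx0).mono (fun y hy => le_trans hv hy.1.le)
        have h2 : HasDerivAt (fun x : ℝ => g' v₀ * x) (g' v₀) x := by
          simpa using (hasDerivAt_id x).const_mul (g' v₀)
        exact h1.sub h2.hasDerivWithinAt
      · intro x hx
        rw [interior_Icc] at hx
        have : g' x ≤ g' v₀ := hmono (le_trans hv hx.1.le) hv₀ hx.2.le
        linarith
    have := key (left_mem_Icc.mpr hle) (right_mem_Icc.mpr hle) hle
    simp only at this
    nlinarith [this]

lemma hasDerivAt_P (μ x : ℝ) (hx : 0 ≤ x) :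
    HasDerivAt (fun y : ℝ => (1 + y) ^ μ) (μ * (1 + x) ^ (μ - 1)) x := by
  have h1 : HasDerivAt (fun y : ℝ => 1 + y) 1 x := by
    simpa using (hasDerivAt_id x).const_add 1
  have h2 := (Real.hasDerivAt_rpow_const (x := 1 + x) (p := μ)
    (Or.inl (by positivity))).comp x h1
  exact h2.congr_deriv (mul_one _)

lemma hasDerivAt_H (c μ q x : ℝ) (hx : 0 ≤ x) :
    HasDerivAt (fun y : ℝ => c * ((1 + y) ^ μ - q) ^ 2)
      (2 * c * ((1 + x) ^ μ - q) * (μ * (1 + x) ^ (μ - 1))) x := by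
  have h1 := (((hasDerivAt_P μ x hx).sub_const q).pow 2).const_mul c
  refine h1.congr_deriv ?_
  push_cast
  ring

lemma hasDerivAt_H' (c μ q x : ℝ) (hx : 0 ≤ x) :
    HasDerivAt (fun y : ℝ => 2 * c * ((1 + y) ^ μ - q) * (μ * (1 + y) ^ (μ - 1)))
      (2 * c * ((μ * (1 + x) ^ (μ - 1)) * (μ * (1 + x) ^ (μ - 1))
        + ((1 + x) ^ μ - q) * (μ * ((μ - 1) * (1 + x) ^ (μ - 2)))) ) x := by
  have hP := hasDerivAt_P μ x hx
  have hP' : HasDerivAt (fun y : ℝ => μ * (1 + y) ^ (μ - 1))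
      (μ * ((μ - 1) * (1 + x) ^ (μ - 2))) x := by
    have := (hasDerivAt_P (μ - 1) x hx).const_mul μ
    simpa [show μ - 1 - 1 = μ - 2 by ring] using this
  have h1 := (((hP.sub_const q).const_mul (2 * c)).mul hP')
  refine h1.congr_deriv ?_
  ring

theorem taylor_remainder_lower_bound (k lam : ℝ) (hk : 0 < k) (hlam : 2 < lam) :
    ∃ c > 0, ∀ f f' f'' : ℝ → ℝ,
      (∀ v ∈ Ici (0:ℝ), HasDerivWithinAt f (f' v) (Ici 0) v) →
      (∀ v ∈ Ici (0:ℝ), HasDerivWithinAt f' (f'' v) (Ici 0) v) →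
      (∀ v ∈ Ici (0:ℝ), k * (1 + v ^ (lam - 2)) ≤ f'' v) →
      ∀ v ∈ Ici (0:ℝ), ∀ v₀ ∈ Ici (0:ℝ),
        c * ((1 + v) ^ (lam / 2) - (1 + v₀) ^ (lam / 2)) ^ 2
          ≤ f v - f v₀ - (v - v₀) * f' v₀ := by
  obtain ⟨μ, hμdef⟩ : ∃ μ : ℝ, μ = lam / 2 := ⟨_, rfl⟩
  have hμ : 1 < μ := by rw [hμdef]; linarith
  have hlam2 : 2 * μ - 2 = lam - 2 := by rw [hμdef]; ring
  have h2pos : (0:ℝ) < (2:ℝ) ^ (lam - 2) := Real.rpow_pos_of_pos two_pos _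
  have hden : (0:ℝ) < 2 * μ * (2 * μ - 1) * (2:ℝ) ^ (lam - 2) := by
    have h1 : (0:ℝ) < 2 * μ := by linarith
    have h2 : (0:ℝ) < 2 * μ - 1 := by linarith
    positivity
  have main : ∀ c : ℝ, 0 < c → 2 * c * μ * (2 * μ - 1) * (2:ℝ) ^ (lam - 2) = k →
      ∀ f f' f'' : ℝ → ℝ,
      (∀ v ∈ Ici (0:ℝ), HasDerivWithinAt f (f' v) (Ici 0) v) →
      (∀ v ∈ Ici (0:ℝ), HasDerivWithinAt f' (f'' v) (Ici 0) v) →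
      (∀ v ∈ Ici (0:ℝ), k * (1 + v ^ (lam - 2)) ≤ f'' v) →
      ∀ v ∈ Ici (0:ℝ), ∀ v₀ ∈ Ici (0:ℝ),
        c * ((1 + v) ^ (lam / 2) - (1 + v₀) ^ (lam / 2)) ^ 2
          ≤ f v - f v₀ - (v - v₀) * f' v₀ := by
    intro c hc hck f f' f'' hf hf' hbound v hv v₀ hv₀
    simp only [mem_Ici] at hv hv₀
    rw [← hμdef]
    obtain ⟨q, hqdef⟩ : ∃ q : ℝ, q = (1 + v₀) ^ μ := ⟨_, rfl⟩
    have hq1 : (1:ℝ) ≤ q := by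
      rw [hqdef]
      calc (1:ℝ) = 1 ^ μ := (Real.one_rpow μ).symm
      _ ≤ (1 + v₀) ^ μ := Real.rpow_le_rpow zero_le_one (by linarith) (by linarith)
    -- second derivative bound for the comparison function
    have hH''le : ∀ x : ℝ, 0 ≤ x →
        2 * c * ((μ * (1 + x) ^ (μ - 1)) * (μ * (1 + x) ^ (μ - 1))
          + ((1 + x) ^ μ - q) * (μ * ((μ - 1) * (1 + x) ^ (μ - 2))))
          ≤ k * (1 + x ^ (lam - 2)) := by
      intro x hx
      have ha : (0:ℝ) < 1 + x := by linarith
      have e1 : (1 + x) ^ (μ - 1) * (1 + x) ^ (μ - 1) = (1 + x) ^ (lam - 2) := by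
        rw [← Real.rpow_add ha]; rw [show μ - 1 + (μ - 1) = 2 * μ - 2 by ring, hlam2]
      have e2 : (1 + x) ^ μ * (1 + x) ^ (μ - 2) = (1 + x) ^ (lam - 2) := by
        rw [← Real.rpow_add ha]; rw [show μ + (μ - 2) = 2 * μ - 2 by ring, hlam2]
      have hpm2 : (0:ℝ) ≤ (1 + x) ^ (μ - 2) := Real.rpow_nonneg ha.le _
      have hP''nn : (0:ℝ) ≤ μ * ((μ - 1) * (1 + x) ^ (μ - 2)) :=
        mul_nonneg (by linarith) (mul_nonneg (by linarith) hpm2)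
      have step1 : ((1 + x) ^ μ - q) * (μ * ((μ - 1) * (1 + x) ^ (μ - 2)))
          ≤ (1 + x) ^ μ * (μ * ((μ - 1) * (1 + x) ^ (μ - 2))) := by
        apply mul_le_mul_of_nonneg_right _ hP''nn
        linarith
      have step2 : (μ * (1 + x) ^ (μ - 1)) * (μ * (1 + x) ^ (μ - 1))
          + (1 + x) ^ μ * (μ * ((μ - 1) * (1 + x) ^ (μ - 2)))
          = μ * (2 * μ - 1) * (1 + x) ^ (lam - 2) := by
        linear_combination (μ * μ) * e1 + (μ * (μ - 1)) * e2
      have step3 : (1 + x) ^ (lam - 2) ≤ (2:ℝ) ^ (lam - 2) * (1 + x ^ (lam - 2)) := by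
        have hxp : (0:ℝ) ≤ x ^ (lam - 2) := Real.rpow_nonneg hx _
        rcases le_total x 1 with hx1 | hx1
        · calc (1 + x) ^ (lam - 2) ≤ (2:ℝ) ^ (lam - 2) :=
                Real.rpow_le_rpow ha.le (by linarith) (by linarith)
            _ ≤ (2:ℝ) ^ (lam - 2) * (1 + x ^ (lam - 2)) := by nlinarith
        · calc (1 + x) ^ (lam - 2) ≤ (2 * x) ^ (lam - 2) :=
                Real.rpow_le_rpow ha.le (by linarith) (by linarith)
            _ = (2:ℝ) ^ (lam - 2) * x ^ (lam - 2) :=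
                Real.mul_rpow (by norm_num) hx
            _ ≤ (2:ℝ) ^ (lam - 2) * (1 + x ^ (lam - 2)) := by nlinarith
      have hμ1 : (0:ℝ) < μ * (2 * μ - 1) := by nlinarith
      calc 2 * c * ((μ * (1 + x) ^ (μ - 1)) * (μ * (1 + x) ^ (μ - 1))
            + ((1 + x) ^ μ - q) * (μ * ((μ - 1) * (1 + x) ^ (μ - 2))))
          ≤ 2 * c * (μ * (2 * μ - 1) * (1 + x) ^ (lam - 2)) := by
            rw [← step2]; nlinarith [step1]
        _ ≤ 2 * c * (μ * (2 * μ - 1) * ((2:ℝ) ^ (lam - 2) * (1 + x ^ (lam - 2)))) := by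
            apply mul_le_mul_of_nonneg_left _ (by linarith)
            exact mul_le_mul_of_nonneg_left step3 hμ1.le
        _ = k * (1 + x ^ (lam - 2)) := by rw [← hck]; ring
    have key := taylor_remainder_nonneg_aux
      (g := fun x => f x - c * ((1 + x) ^ μ - q) ^ 2)
      (g' := fun x => f' x - 2 * c * ((1 + x) ^ μ - q) * (μ * (1 + x) ^ (μ - 1)))
      (g'' := fun x => f'' x - 2 * c * ((μ * (1 + x) ^ (μ - 1)) * (μ * (1 + x) ^ (μ - 1))
          + ((1 + x) ^ μ - q) * (μ * ((μ - 1) * (1 + x) ^ (μ - 2)))))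
      (fun x hx => (hf x hx).sub (hasDerivAt_H c μ q x hx).hasDerivWithinAt)
      (fun x hx => (hf' x hx).sub (hasDerivAt_H' c μ q x hx).hasDerivWithinAt)
      (fun x hx => by
        have h1 := hbound x hx
        have h2 := hH''le x hx
        simp only [mem_Ici] at hx
        linarith)
      hv hv₀
    have hq0 : (1 + v₀) ^ μ - q = 0 := by rw [hqdef]; ring
    rw [hq0] at key
    simp only [mul_zero, zero_mul, sub_zero, zero_pow, ne_eq, OfNat.ofNat_ne_zero,
      not_false_eq_true] at key
    rw [← hqdef]
    linarith [key]
  exact ⟨k / (2 * μ * (2 * μ - 1) * (2:ℝ) ^ (lam - 2)), div_pos hk hden,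
    main _ (div_pos hk hden) (by have : (2 * μ - 1) ≠ 0 := (by linarith); field_simp)⟩
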